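/- Given algebraic (or more generally complex) numbers a₁,…,a_d spanning a ℚ-vector space, there exist positive rational numbers λ₁,…,λ_d such that for all integers n₁,…,n_d: n₁a₁+⋯+n_da_d = 0 if and only if λ₁^{n₁}⋯λ_d^{n_d} = 1. -/

import Mathlib

lemma pvr_zpow (p : ℕ) [hp : Fact p.Prime] (q : ℚ) (hq : q ≠ 0) (e : ℤ) :
    padicValRat p (q ^ e) = e * padicValRat p q := by
  cases e with
  | ofNat k => simp [zpow_natCast, padicValRat.pow q]
  | negSucc k =>
      rw [zpow_negSucc, padicValRat.inv, padicValRat.pow q]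
      simp [Int.negSucc_eq]; ring

lemma pvr_prod {ι : Type*} (p : ℕ) [hp : Fact p.Prime] (s : Finset ι) (f : ι → ℚ)
    (hf : ∀ i ∈ s, f i ≠ 0) :
    padicValRat p (∏ i ∈ s, f i) = ∑ i ∈ s, padicValRat p (f i) := by
  classical
  induction s using Finset.cons_induction with
  | empty => simp [padicValRat.one]
  | cons i s hi ih =>
      rw [Finset.prod_cons, Finset.sum_cons,
        padicValRat.mul (hf i (Finset.mem_cons_self i s))
          (Finset.prod_ne_zero_iff.2 fun j hj => hf j (Finset.mem_cons_of_mem hj)),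
        ih (fun j hj => hf j (Finset.mem_cons_of_mem hj))]

lemma primes_prod_eq_one {r : ℕ} (p : Fin r → ℕ) (hp : ∀ j, (p j).Prime)
    (hinj : Function.Injective p) (e : Fin r → ℤ)
    (h : ∏ j, (p j : ℚ) ^ e j = 1) : ∀ j, e j = 0 := by
  intro k
  haveI : Fact (p k).Prime := ⟨hp k⟩
  have hne : ∀ j, ((p j : ℚ)) ^ e j ≠ 0 := fun j =>
    zpow_ne_zero _ (Nat.cast_ne_zero.2 (hp j).pos.ne')
  have := congrArg (padicValRat (p k)) h
  rw [padicValRat.one, pvr_prod (p k) Finset.univ _ (fun j _ => hne j)] at this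
  have hval : ∀ j, padicValRat (p k) ((p j : ℚ) ^ e j) = if j = k then e j else 0 := by
    intro j
    rw [pvr_zpow (p k) _ (Nat.cast_ne_zero.2 (hp j).pos.ne')]
    by_cases hjk : j = k
    · subst hjk; rw [padicValRat.self (hp j).one_lt]; simp
    · have : padicValRat (p k) (p j) = 0 := by
        rw [padicValRat.of_nat, padicValNat.eq_zero_of_not_dvd]
        · simp
        · intro hdvd
          exact hjk (hinj ((Nat.prime_dvd_prime_iff_eq (hp k) (hp j)).1 hdvd)).symm
      simp [hjk, this]
  rw [Finset.sum_congr rfl (fun j _ => hval j), Finset.sum_ite_eq' Finset.univ k e] at this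
  simpa using this

lemma zpow_sum_group {G : Type*} [CommGroup G] {ι : Type*} (a : G) (s : Finset ι) (f : ι → ℤ) :
    ∏ i ∈ s, a ^ f i = a ^ (∑ i ∈ s, f i) := by
  classical
  induction s using Finset.cons_induction with
  | empty => simp
  | cons i s hi ih => rw [Finset.prod_cons, Finset.sum_cons, ih, zpow_add]

lemma rat_mul_den_int (q : ℚ) (D : ℕ) (h : q.den ∣ D) :
    ((q.num * (D / q.den : ℕ) : ℤ) : ℚ) = q * D := by
  obtain ⟨c, hc⟩ := h
  subst hc
  rw [Nat.mul_div_cancel_left c q.den_pos]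
  push_cast
  have hden : (q.den : ℚ) ≠ 0 := Nat.cast_ne_zero.2 q.den_pos.ne'
  have hq : q * (q.den : ℚ) = (q.num : ℚ) := by
    nth_rewrite 1 [← Rat.num_div_den q]
    rw [div_mul_cancel₀ _ hden]
  calc (q.num : ℚ) * c = q * (q.den : ℚ) * c := by rw [hq]
    _ = q * ((q.den : ℚ) * c) := by ring


lemma units_val_prod {ι : Type*} (s : Finset ι) (f : ι → ℚˣ) :
    ((∏ i ∈ s, f i : ℚˣ) : ℚ) = ∏ i ∈ s, (f i : ℚ) :=
  map_prod (Units.coeHom ℚ) f s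

/-- Given complex numbers `a₁,…,a_d`, there exist positive rationals `λ₁,…,λ_d`
whose multiplicative relations are exactly the additive relations of the `aᵢ`. -/
theorem additive_to_multiplicative_relations (d : ℕ) (a : Fin d → ℂ) :
    ∃ lam : Fin d → ℚ, (∀ i, 0 < lam i) ∧
      ∀ n : Fin d → ℤ,
        (∑ i, (n i : ℂ) * a i = 0 ↔ ∏ i, lam i ^ (n i) = 1) := by
  classical
  haveI : FiniteDimensional ℚ (Submodule.span ℚ (Set.range a)) :=
    FiniteDimensional.span_of_finite ℚ (Set.finite_range a)
  set W := Submodule.span ℚ (Set.range a) with hW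
  set r := Module.finrank ℚ W with hr
  let b : Module.Basis (Fin r) ℚ W := Module.finBasis ℚ W
  let w : Fin d → W := fun i => ⟨a i, Submodule.subset_span ⟨i, rfl⟩⟩
  let M : Fin r → Fin d → ℚ := fun j i => b.coord j (w i)
  -- step 1: additive relations ↔ rational linear relations
  have step1 : ∀ n : Fin d → ℤ,
      (∑ i, (n i : ℂ) * a i = 0 ↔ ∀ j, ∑ i, (n i : ℚ) * M j i = 0) := by
    intro n
    have hcoe : ((∑ i, (n i : ℚ) • w i : W) : ℂ) = ∑ i, (n i : ℂ) * a i := by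
      push_cast [AddSubmonoidClass.coe_finset_sum]
      refine Finset.sum_congr rfl fun i _ => ?_
      rw [Rat.smul_def, Rat.cast_intCast]
    constructor
    · intro h j
      have h0 : (∑ i, (n i : ℚ) • w i : W) = 0 := by
        apply Subtype.ext
        rw [hcoe]; exact h
      have := congrArg (b.coord j) h0
      simpa [map_sum, map_smul, M, smul_eq_mul] using this
    · intro h
      have h0 : (∑ i, (n i : ℚ) • w i : W) = 0 := by
        rw [← b.forall_coord_eq_zero_iff]
        intro j
        simpa [map_sum, map_smul, M, smul_eq_mul] using h j
      rw [← hcoe, h0]; simp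
  -- step 2: clear denominators
  set D : ℕ := ∏ j, ∏ i, (M j i).den with hD
  have hDpos : 0 < D := Finset.prod_pos fun j _ => Finset.prod_pos fun i _ => (M j i).den_pos
  have hdvd : ∀ j i, (M j i).den ∣ D := fun j i =>
    dvd_trans (Finset.dvd_prod_of_mem (fun i => (M j i).den) (Finset.mem_univ i))
      (Finset.dvd_prod_of_mem (fun j => ∏ i, (M j i).den) (Finset.mem_univ j))
  set N : Fin r → Fin d → ℤ := fun j i => (M j i).num * (D / (M j i).den : ℕ) with hN
  have hNcast : ∀ j i, ((N j i : ℤ) : ℚ) = M j i * D := fun j i =>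
    rat_mul_den_int (M j i) D (hdvd j i)
  have step2 : ∀ n : Fin d → ℤ,
      ((∀ j, ∑ i, (n i : ℚ) * M j i = 0) ↔ ∀ j, ∑ i, n i * N j i = 0) := by
    intro n
    refine forall_congr' fun j => ?_
    have hcast : ((∑ i, n i * N j i : ℤ) : ℚ) = D * ∑ i, (n i : ℚ) * M j i := by
      push_cast
      rw [Finset.mul_sum]
      refine Finset.sum_congr rfl fun i _ => ?_
      rw [hNcast j i]; ring
    constructor
    · intro h
      have : ((∑ i, n i * N j i : ℤ) : ℚ) = 0 := by rw [hcast, h, mul_zero]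
      exact_mod_cast this
    · intro h
      have : (D : ℚ) * ∑ i, (n i : ℚ) * M j i = 0 := by
        rw [← hcast, h, Int.cast_zero]
      rcases mul_eq_zero.1 this with h' | h'
      · exact absurd h' (Nat.cast_ne_zero.2 hDpos.ne')
      · exact h'
  -- step 3: primes
  let p : Fin r → ℕ := fun j => Nat.nth Nat.Prime j
  have hp : ∀ j, (p j).Prime := fun j => Nat.nth_mem_of_infinite Nat.infinite_setOf_prime j
  have hpinj : Function.Injective p := fun j k h =>
    Fin.val_injective (Nat.nth_injective Nat.infinite_setOf_prime h)
  let P : Fin r → ℚˣ := fun j => Units.mk0 (p j : ℚ) (Nat.cast_ne_zero.2 (hp j).pos.ne')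
  let u : Fin d → ℚˣ := fun i => ∏ j, P j ^ N j i
  refine ⟨fun i => (u i : ℚ), fun i => ?_, fun n => ?_⟩
  · -- positivity
    show (0 : ℚ) < (u i : ℚ)
    have huv : ((u i : ℚ)) = ∏ j, (p j : ℚ) ^ N j i := by
      show ((∏ j, P j ^ N j i : ℚˣ) : ℚ) = _
      rw [units_val_prod]
      exact Finset.prod_congr rfl fun j _ => by
        rw [Units.val_zpow_eq_zpow_val]; rfl
    rw [huv]
    exact Finset.prod_pos fun j _ =>
      zpow_pos (by exact_mod_cast (hp j).pos) _
  · rw [step1 n, step2 n]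
    have hprod : ∏ i, ((u i : ℚ)) ^ n i = ((∏ i, u i ^ n i : ℚˣ) : ℚ) := by
      rw [units_val_prod]
      exact Finset.prod_congr rfl fun i _ => (Units.val_zpow_eq_zpow_val (u i) (n i)).symm
    have hu : (∏ i, u i ^ n i : ℚˣ) = ∏ j, P j ^ (∑ i, N j i * n i) := by
      calc (∏ i, u i ^ n i : ℚˣ)
          = ∏ i, ∏ j, P j ^ (N j i * n i) := by
            refine Finset.prod_congr rfl fun i _ => ?_
            show (∏ j, P j ^ N j i) ^ n i = _
            rw [← Finset.prod_zpow]
            exact Finset.prod_congr rfl fun j _ => (zpow_mul _ _ _).symm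
        _ = ∏ j, ∏ i, P j ^ (N j i * n i) := Finset.prod_comm
        _ = ∏ j, P j ^ (∑ i, N j i * n i) :=
            Finset.prod_congr rfl fun j _ => zpow_sum_group _ _ _
    constructor
    · intro h
      rw [hprod, hu]
      have : ∀ j, (∑ i, N j i * n i) = 0 := by
        intro j
        rw [Finset.sum_congr rfl fun i _ => mul_comm (N j i) (n i)]
        exact h j
      simp [this]
    · intro h j
      rw [hprod, hu] at h
      have h' : ∏ j, ((p j : ℚ)) ^ (∑ i, N j i * n i) = 1 := by
        rw [← h, units_val_prod]
        exact Finset.prod_congr rfl fun j _ => by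
          rw [Units.val_zpow_eq_zpow_val]; rfl
      have := primes_prod_eq_one p hp hpinj _ h' j
      rw [← this]
      exact Finset.sum_congr rfl fun i _ => mul_comm (n i) (N j i)
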